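/- Let θ be irrational with leaping subscripts I_j (where the partial quotients a_j = b_{I_j+1} tend to infinity, and all other partial quotients are bounded), and let φ = (rθ + m)/n be in reduced form. Then L(θ, φ) = 0 if and only if there exist infinitely many leapers ℒ_j = (p_{I_j}, q_{I_j}) such that g_j·ℒ_j ≡ (m, −r) (mod n) for some integer g_j invertible modulo n. -/

import Mathlib

noncomputable def distNearestInt (x : ℝ) : ℝ := |x - round x|

noncomputable def Lconst (θ φ : ℝ) : ℝ :=
  Filter.liminf (fun q : ℤ => |(q : ℝ)| * distNearestInt (q * θ - φ)) Filter.cofinite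

namespace LeaperAux

open Filter Real Set

lemma dni_nonneg (x : ℝ) : 0 ≤ distNearestInt x := abs_nonneg _

lemma dni_le (x : ℝ) (M : ℤ) : distNearestInt x ≤ |x - M| := by
  rcases le_or_gt (1/2 : ℝ) (|x - M|) with hM | hM
  · exact le_trans (abs_sub_round x) hM
  · have : round x = M := by
      have h1 : (M : ℝ) - 1/2 < x := by
        have := abs_lt.mp hM; linarith [this.1]
      have h2 : x < (M : ℝ) + 1/2 := by
        have := abs_lt.mp hM; linarith [this.2]
      rw [round_eq]
      refine Int.floor_eq_iff.mpr ⟨by push_cast; linarith, by push_cast; linarith⟩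
    rw [distNearestInt, this]

structure CFPkg (ξ : ℝ) (d P Q : ℕ → ℤ) : Prop where
  hirr : Irrational ξ
  hd : ∀ k : ℕ, 1 ≤ d (k+1)
  hP0 : P 0 = d 0
  hQ0 : Q 0 = 1
  hP1 : P 1 = d 1 * d 0 + 1
  hQ1 : Q 1 = d 1
  hPrec : ∀ k : ℕ, P (k+2) = d (k+2) * P (k+1) + P k
  hQrec : ∀ k : ℕ, Q (k+2) = d (k+2) * Q (k+1) + Q k
  hlim : Filter.Tendsto (fun k : ℕ => (P k : ℝ)/(Q k : ℝ)) Filter.atTop (nhds ξ)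

namespace CFPkg

variable {ξ : ℝ} {d P Q : ℕ → ℤ}

lemma Qpos (h : CFPkg ξ d P Q) : ∀ k, 1 ≤ Q k := by
  have key : ∀ k, 1 ≤ Q k ∧ 1 ≤ Q (k+1) := by
    intro k
    induction k with
    | zero => exact ⟨by rw [h.hQ0], by rw [h.hQ1]; exact h.hd 0⟩
    | succ k ih =>
      refine ⟨ih.2, ?_⟩
      rw [h.hQrec k]
      nlinarith [h.hd (k+1), ih.1, ih.2]
  exact fun k => (key k).1

lemma Qmono (h : CFPkg ξ d P Q) : ∀ k, Q k ≤ Q (k+1) := by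
  intro k
  cases k with
  | zero => rw [h.hQ0, h.hQ1]; exact h.hd 0
  | succ k =>
    rw [h.hQrec k]
    nlinarith [h.hd (k+1), h.Qpos k, h.Qpos (k+1)]

lemma Qmono' (h : CFPkg ξ d P Q) : Monotone Q := monotone_nat_of_le_succ h.Qmono

lemma Qge (h : CFPkg ξ d P Q) : ∀ k : ℕ, (k : ℤ) ≤ Q k := by
  have key : ∀ k : ℕ, (k : ℤ) ≤ Q k ∧ ((k:ℤ)+1) ≤ Q (k+1) := by
    intro k
    induction k with
    | zero => exact ⟨by rw [h.hQ0]; norm_num, by rw [h.hQ1]; push_cast; linarith [h.hd 0]⟩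
    | succ k ih =>
      refine ⟨by push_cast; exact_mod_cast ih.2, ?_⟩
      rw [h.hQrec k]
      push_cast
      nlinarith [h.hd (k+1), h.Qpos k, h.Qpos (k+1), ih.2]
  exact fun k => (key k).1

lemma Qsucc_ge (h : CFPkg ξ d P Q) : ∀ k, d (k+1) * Q k ≤ Q (k+1) := by
  intro k
  cases k with
  | zero => rw [h.hQ0, h.hQ1]; ring_nf; exact le_refl _
  | succ k => rw [h.hQrec k]; nlinarith [h.Qpos k]

lemma Qsucc_le (h : CFPkg ξ d P Q) : ∀ k, Q (k+1) ≤ (d (k+1) + 1) * Q k := by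
  intro k
  cases k with
  | zero => rw [h.hQ0, h.hQ1]; nlinarith [h.hd 0]
  | succ k => rw [h.hQrec k]; nlinarith [h.Qmono k, h.Qpos k]

lemma det (h : CFPkg ξ d P Q) : ∀ k, P (k+1) * Q k - P k * Q (k+1) = (-1)^k := by
  intro k
  induction k with
  | zero => rw [h.hP0, h.hQ0, h.hP1, h.hQ1]; ring
  | succ k ih =>
    rw [h.hPrec k, h.hQrec k]
    linear_combination (-1 : ℤ) * ih

lemma det2 (h : CFPkg ξ d P Q) : ∀ k, P (k+2) * Q k - P k * Q (k+2) = (-1)^k * d (k+2) := by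
  intro k
  have := h.det k
  rw [h.hPrec k, h.hQrec k]
  linear_combination (d (k+2)) * this

lemma coprime (h : CFPkg ξ d P Q) : ∀ k, IsCoprime (P k) (Q k) := by
  intro k
  have hdet := h.det k
  rcases Nat.even_or_odd k with hk | hk
  · rw [hk.neg_one_pow] at hdet
    exact ⟨-(Q (k+1)), P (k+1), by linear_combination hdet⟩
  · rw [hk.neg_one_pow] at hdet
    exact ⟨Q (k+1), -(P (k+1)), by linear_combination (-1 : ℤ) * hdet⟩

lemma Qr_pos (h : CFPkg ξ d P Q) (k : ℕ) : (0:ℝ) < (Q k : ℝ) := by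
  exact_mod_cast lt_of_lt_of_le zero_lt_one (h.Qpos k)

lemma xdiff (h : CFPkg ξ d P Q) (k : ℕ) :
    (P (k+1) : ℝ)/(Q (k+1) : ℝ) - (P k : ℝ)/(Q k : ℝ)
      = (-1:ℝ)^k / ((Q k : ℝ) * (Q (k+1) : ℝ)) := by
  have hd := h.det k
  have hd' : ((P (k+1) : ℝ)) * (Q k : ℝ) - (P k : ℝ) * (Q (k+1) : ℝ) = (-1:ℝ)^k := by
    exact_mod_cast congrArg (fun z : ℤ => (z : ℝ)) hd
  have h1 := h.Qr_pos k
  have h2 := h.Qr_pos (k+1)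
  rw [div_sub_div _ _ h2.ne' h1.ne', div_eq_div_iff (by positivity) (by positivity)]
  linear_combination ((Q k : ℝ) * (Q (k+1) : ℝ)) * hd'

lemma xdiff2 (h : CFPkg ξ d P Q) (k : ℕ) :
    (P (k+2) : ℝ)/(Q (k+2) : ℝ) - (P k : ℝ)/(Q k : ℝ)
      = ((-1:ℝ)^k * (d (k+2) : ℝ)) / ((Q k : ℝ) * (Q (k+2) : ℝ)) := by
  have hd := h.det2 k
  have hd' : ((P (k+2) : ℝ)) * (Q k : ℝ) - (P k : ℝ) * (Q (k+2) : ℝ)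
      = (-1:ℝ)^k * (d (k+2) : ℝ) := by
    exact_mod_cast congrArg (fun z : ℤ => (z : ℝ)) hd
  have h1 := h.Qr_pos k
  have h2 := h.Qr_pos (k+2)
  rw [div_sub_div _ _ h2.ne' h1.ne', div_eq_div_iff (by positivity) (by positivity)]
  linear_combination ((Q k : ℝ) * (Q (k+2) : ℝ)) * hd'

lemma between (h : CFPkg ξ d P Q) (k : ℕ) :
    0 < (-1:ℝ)^k * (ξ - (P k : ℝ)/(Q k : ℝ)) := by
  have hsq : (-1:ℝ)^k * (-1:ℝ)^k = 1 := by
    rw [← pow_add]; exact Even.neg_one_pow ⟨k, rfl⟩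
  set u : ℕ → ℝ := fun j => (-1:ℝ)^k * ((P (k+2*j) : ℝ)/(Q (k+2*j) : ℝ)) with hu
  have hstep : ∀ j : ℕ, u j < u (j+1) := by
    intro j
    have hx := h.xdiff2 (k+2*j)
    have hQ1 := h.Qr_pos (k+2*j)
    have hQ2 := h.Qr_pos (k+2*j+2)
    have hdd : (1:ℝ) ≤ (d (k+2*j+2) : ℝ) := by exact_mod_cast h.hd _
    have hsign : ((-1:ℝ))^(k+2*j) = (-1:ℝ)^k := by
      rw [pow_add, pow_mul]; norm_num
    have e2 : k+2*(j+1) = (k+2*j)+2 := by ring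
    have e1 : u (j+1) - u j
        = (-1:ℝ)^k * ((P ((k+2*j)+2) : ℝ)/(Q ((k+2*j)+2) : ℝ)
            - (P (k+2*j) : ℝ)/(Q (k+2*j) : ℝ)) := by
      rw [hu]; simp only [e2]; ring
    rw [hx, hsign] at e1
    have epos : 0 < u (j+1) - u j := by
      rw [e1]
      have : (-1:ℝ)^k * ((-1:ℝ)^k * (d (k+2*j+2) : ℝ) / ((Q (k+2*j) : ℝ) * (Q (k+2*j+2) : ℝ)))
          = (d (k+2*j+2) : ℝ) / ((Q (k+2*j) : ℝ) * (Q (k+2*j+2) : ℝ)) := by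
        field_simp; linear_combination hsq
      rw [this]
      positivity
    linarith
  have hmono : Monotone u := monotone_nat_of_le_succ (fun j => (hstep j).le)
  have htend : Tendsto u atTop (nhds ((-1:ℝ)^k * ξ)) := by
    have hsub : Tendsto (fun j : ℕ => k + 2*j) atTop atTop :=
      tendsto_atTop_mono (fun j => by simp only [id_eq]; omega) tendsto_id
    exact (h.hlim.comp hsub).const_mul _
  have hle : u 1 ≤ (-1:ℝ)^k * ξ :=
    ge_of_tendsto htend (eventually_atTop.mpr ⟨1, fun j hj => hmono hj⟩)
  have h01 := hstep 0
  have hx0 : u 0 = (-1:ℝ)^k * ((P k : ℝ)/(Q k : ℝ)) := by simp [hu]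
  have : (-1:ℝ)^k * (ξ - (P k : ℝ)/(Q k : ℝ)) = (-1:ℝ)^k * ξ - u 0 := by
    rw [hx0]; ring
  rw [this]; linarith

lemma abs_of_sign {s y : ℝ} (hs : s*s = 1) (hy : 0 < s*y) : |y| = s*y := by
  have : (s - 1)*(s + 1) = 0 := by linear_combination hs
  rcases mul_eq_zero.mp this with h1 | h1
  · have : s = 1 := by linarith
    subst this; rw [one_mul] at hy ⊢; exact abs_of_pos hy
  · have : s = -1 := by linarith
    subst this
    have : y < 0 := by nlinarith
    rw [abs_of_neg this]; ring

lemma hsq (k : ℕ) : (-1:ℝ)^k * (-1:ℝ)^k = 1 := by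
  rw [← pow_add]; exact Even.neg_one_pow ⟨k, rfl⟩

lemma esign (h : CFPkg ξ d P Q) (k : ℕ) :
    0 < (-1:ℝ)^k * ((Q k : ℝ) * ξ - (P k : ℝ)) := by
  have hb := h.between k
  have hQ := h.Qr_pos k
  have e : (Q k : ℝ) * ξ - (P k : ℝ) = (Q k : ℝ) * (ξ - (P k : ℝ)/(Q k : ℝ)) := by
    field_simp
  rw [e]
  nlinarith [hb, hQ]

lemma eabs (h : CFPkg ξ d P Q) (k : ℕ) :
    |(Q k : ℝ) * ξ - (P k : ℝ)| = (-1:ℝ)^k * ((Q k : ℝ) * ξ - (P k : ℝ)) :=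
  abs_of_sign (hsq k) (h.esign k)

lemma eupper (h : CFPkg ξ d P Q) (k : ℕ) :
    |(Q k : ℝ) * ξ - (P k : ℝ)| < 1 / (Q (k+1) : ℝ) := by
  have hb1 := h.between k
  have hb2 := h.between (k+1)
  have hx := h.xdiff k
  have hQ := h.Qr_pos k
  have hQ' := h.Qr_pos (k+1)
  have hs := hsq k
  rw [pow_succ] at hb2
  rw [h.eabs k]
  have key : (-1:ℝ)^k * (ξ - (P k : ℝ)/(Q k : ℝ)) < 1 / ((Q k : ℝ) * (Q (k+1) : ℝ)) := by
    have e3 : (-1:ℝ)^k * (ξ - (P k : ℝ)/(Q k : ℝ))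
        = (-1:ℝ)^k * (ξ - (P (k+1) : ℝ)/(Q (k+1) : ℝ))
          + (-1:ℝ)^k * ((P (k+1) : ℝ)/(Q (k+1) : ℝ) - (P k : ℝ)/(Q k : ℝ)) := by ring
    rw [hx] at e3
    have e4 : (-1:ℝ)^k * ((-1:ℝ)^k / ((Q k : ℝ) * (Q (k+1) : ℝ)))
        = 1 / ((Q k : ℝ) * (Q (k+1) : ℝ)) := by
      rw [mul_div_assoc', hs]
    rw [e4] at e3
    have h5 : (-1:ℝ)^k * (ξ - (P (k+1) : ℝ)/(Q (k+1) : ℝ)) < 0 := by nlinarith [hb2]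
    linarith [e3.le, h5]
  have e : (-1:ℝ)^k * ((Q k : ℝ) * ξ - (P k : ℝ))
      = (Q k : ℝ) * ((-1:ℝ)^k * (ξ - (P k : ℝ)/(Q k : ℝ))) := by
    field_simp
  rw [e]
  have e5 : (Q k : ℝ) * (1 / ((Q k : ℝ) * (Q (k+1) : ℝ))) = 1 / (Q (k+1) : ℝ) := by
    field_simp
  have := mul_lt_mul_of_pos_left key hQ
  rw [e5] at this
  exact this

lemma elower (h : CFPkg ξ d P Q) (k : ℕ) :
    (d (k+2) : ℝ) / (Q (k+2) : ℝ) < |(Q k : ℝ) * ξ - (P k : ℝ)| := by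
  have hb2 := h.between (k+2)
  have hx := h.xdiff2 k
  have hQ := h.Qr_pos k
  have hQ'' := h.Qr_pos (k+2)
  have hs := hsq k
  have hsign2 : ((-1:ℝ))^(k+2) = (-1:ℝ)^k := by
    rw [pow_add]; norm_num
  rw [hsign2] at hb2
  rw [h.eabs k]
  have e : (-1:ℝ)^k * ((Q k : ℝ) * ξ - (P k : ℝ))
      = (Q k : ℝ) * ((-1:ℝ)^k * (ξ - (P k : ℝ)/(Q k : ℝ))) := by
    field_simp
  rw [e]
  have key : (d (k+2) : ℝ) / ((Q k : ℝ) * (Q (k+2) : ℝ))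
      < (-1:ℝ)^k * (ξ - (P k : ℝ)/(Q k : ℝ)) := by
    have e3 : (-1:ℝ)^k * (ξ - (P k : ℝ)/(Q k : ℝ))
        = (-1:ℝ)^k * (ξ - (P (k+2) : ℝ)/(Q (k+2) : ℝ))
          + (-1:ℝ)^k * ((P (k+2) : ℝ)/(Q (k+2) : ℝ) - (P k : ℝ)/(Q k : ℝ)) := by ring
    rw [hx] at e3
    have e4 : (-1:ℝ)^k * ((-1:ℝ)^k * (d (k+2) : ℝ) / ((Q k : ℝ) * (Q (k+2) : ℝ)))
        = (d (k+2) : ℝ) / ((Q k : ℝ) * (Q (k+2) : ℝ)) := by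
      rw [mul_div_assoc', ← mul_assoc, hs, one_mul]
    rw [e4] at e3
    linarith [hb2]
  have e5 : (Q k : ℝ) * ((d (k+2) : ℝ) / ((Q k : ℝ) * (Q (k+2) : ℝ)))
      = (d (k+2) : ℝ) / (Q (k+2) : ℝ) := by
    field_simp
  have := mul_lt_mul_of_pos_left key hQ
  rw [e5] at this
  exact this

lemma prodUpper (h : CFPkg ξ d P Q) (k : ℕ) :
    (Q k : ℝ) * |(Q k : ℝ) * ξ - (P k : ℝ)| ≤ 1 / (d (k+1) : ℝ) := by
  have h1 := h.eupper k
  have hQ := h.Qr_pos k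
  have hQ' := h.Qr_pos (k+1)
  have hd1 : (1:ℝ) ≤ (d (k+1) : ℝ) := by exact_mod_cast h.hd k
  have hge : (d (k+1) : ℝ) * (Q k : ℝ) ≤ (Q (k+1) : ℝ) := by exact_mod_cast h.Qsucc_ge k
  have step1 : (Q k : ℝ) * |(Q k : ℝ) * ξ - (P k : ℝ)| ≤ (Q k : ℝ) * (1 / (Q (k+1) : ℝ)) :=
    mul_le_mul_of_nonneg_left h1.le hQ.le
  refine step1.trans ?_
  rw [mul_one_div, div_le_div_iff₀ hQ' (by linarith)]
  nlinarith [hge]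

lemma prodLower (h : CFPkg ξ d P Q) (k : ℕ) :
    1 / ((d (k+1) : ℝ) + 2) < (Q k : ℝ) * |(Q k : ℝ) * ξ - (P k : ℝ)| := by
  have h2 := h.elower k
  have hQ := h.Qr_pos k
  have hQ'' := h.Qr_pos (k+2)
  have hZ : Q (k+2) ≤ (d (k+1) + 2) * (Q k * d (k+2)) := by
    nlinarith [h.hQrec k, h.Qsucc_le k, h.hd k, h.hd (k+1), h.Qpos k, h.Qpos (k+1)]
  have hZR : (Q (k+2) : ℝ) ≤ ((d (k+1) : ℝ) + 2) * ((Q k : ℝ) * (d (k+2) : ℝ)) := by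
    exact_mod_cast hZ
  have hd2 : (1:ℝ) ≤ (d (k+2) : ℝ) := by exact_mod_cast h.hd (k+1)
  have hd1 : (1:ℝ) ≤ (d (k+1) : ℝ) := by exact_mod_cast h.hd k
  have step1 : (Q k : ℝ) * ((d (k+2) : ℝ) / (Q (k+2) : ℝ))
      < (Q k : ℝ) * |(Q k : ℝ) * ξ - (P k : ℝ)| :=
    mul_lt_mul_of_pos_left h2 hQ
  refine lt_of_le_of_lt ?_ step1
  rw [mul_div_assoc', div_le_div_iff₀ (by linarith) hQ'']
  nlinarith [hZR]

lemma floor_eq (h : CFPkg ξ d P Q) : ⌊ξ⌋ = d 0 := by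
  have hb0 := h.between 0
  have hb1 := h.between 1
  simp only [pow_zero, pow_one, one_mul] at hb0 hb1
  rw [h.hP0, h.hQ0] at hb0
  rw [h.hP1, h.hQ1] at hb1
  have hd1 : (1:ℝ) ≤ (d 1 : ℝ) := by exact_mod_cast h.hd 0
  have hx1 : ((d 1 * d 0 + 1 : ℤ) : ℝ) / ((d 1 : ℤ) : ℝ) ≤ (d 0 : ℝ) + 1 := by
    rw [div_le_iff₀ (by push_cast; linarith)]
    push_cast
    nlinarith
  have h1 : (d 0 : ℝ) < ξ := by
    have e0 : ((d 0 : ℤ) : ℝ) / ((1 : ℤ) : ℝ) = (d 0 : ℝ) := by norm_num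
    rw [e0] at hb0; linarith
  have h2 : ξ < (d 0 : ℝ) + 1 := by nlinarith [hb1, hx1]
  rw [Int.floor_eq_iff]
  exact ⟨h1.le, by push_cast; exact h2⟩

lemma fract_eq (h : CFPkg ξ d P Q) : Int.fract ξ = ξ - (d 0 : ℝ) := by
  rw [Int.fract, h.floor_eq]

lemma xi_sub_pos (h : CFPkg ξ d P Q) : 0 < ξ - (d 0 : ℝ) := by
  have hb0 := h.between 0
  simp only [pow_zero, one_mul] at hb0
  rw [h.hP0, h.hQ0] at hb0
  have e0 : ((d 0 : ℤ) : ℝ) / ((1 : ℤ) : ℝ) = (d 0 : ℝ) := by norm_num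
  rw [e0] at hb0; linarith

lemma shift (h : CFPkg ξ d P Q) :
    CFPkg (Int.fract ξ)⁻¹ (fun k => d (k+1)) (fun k => Q (k+1))
      (fun k => P (k+1) - d 0 * Q (k+1)) := by
  have hfr := h.fract_eq
  have hpos := h.xi_sub_pos
  refine ⟨?_, ?_, ?_, ?_, ?_, ?_, ?_, ?_, ?_⟩
  · rw [hfr]
    exact (h.hirr.sub_intCast (d 0)).inv
  · exact fun k => h.hd (k+1)
  · exact h.hQ1
  · rw [h.hP1, h.hQ1]; ring
  · show Q 2 = d 2 * d 1 + 1
    rw [h.hQrec 0, h.hQ1, h.hQ0]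
  · show P 2 - d 0 * Q 2 = d 2
    rw [h.hPrec 0, h.hQrec 0, h.hP1, h.hQ1, h.hP0, h.hQ0]; ring
  · intro k
    show Q (k+3) = d (k+3) * Q (k+2) + Q (k+1)
    exact h.hQrec (k+1)
  · intro k
    show P (k+3) - d 0 * Q (k+3) = d (k+3) * (P (k+2) - d 0 * Q (k+2)) + (P (k+1) - d 0 * Q (k+1))
    rw [h.hPrec (k+1), h.hQrec (k+1)]; ring
  · have hne : ξ - (d 0 : ℝ) ≠ 0 := ne_of_gt hpos
    have base : Tendsto (fun k : ℕ => (P (k+1) : ℝ)/(Q (k+1) : ℝ) - (d 0 : ℝ)) atTop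
        (nhds (ξ - (d 0 : ℝ))) := by
      exact (h.hlim.comp (tendsto_add_atTop_nat 1)).sub_const _
    have hinv : Tendsto (fun k : ℕ => ((P (k+1) : ℝ)/(Q (k+1) : ℝ) - (d 0 : ℝ))⁻¹) atTop
        (nhds ((ξ - (d 0 : ℝ))⁻¹)) := base.inv₀ hne
    rw [hfr]
    refine hinv.congr (fun k => ?_)
    have hQ := h.Qr_pos (k+1)
    have e1 : (P (k+1) : ℝ)/(Q (k+1) : ℝ) - (d 0 : ℝ)
        = ((P (k+1) : ℝ) - (d 0 : ℝ) * (Q (k+1) : ℝ))/(Q (k+1) : ℝ) := by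
      field_simp
    rw [e1, inv_div]
    push_cast
    ring
lemma bridge : ∀ (k : ℕ) (ξ : ℝ) (d P Q : ℕ → ℤ), CFPkg ξ d P Q →
    Real.convergent ξ k = (P k : ℚ) / (Q k : ℚ) := by
  intro k
  induction k with
  | zero =>
    intro ξ d P Q h
    rw [Real.convergent_zero, h.floor_eq, h.hP0, h.hQ0]
    norm_num
  | succ k ih =>
    intro ξ d P Q h
    rw [Real.convergent_succ, h.floor_eq, ih _ _ _ _ h.shift]
    have hQ : ((Q (k+1) : ℤ) : ℚ) ≠ 0 := by
      have := h.Qpos (k+1)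
      intro hc
      rw [Int.cast_eq_zero] at hc
      omega
    show (d 0 : ℚ) + (((Q (k+1) : ℤ) : ℚ) / ((P (k+1) - d 0 * Q (k+1) : ℤ) : ℚ))⁻¹
        = (P (k+1) : ℚ) / (Q (k+1) : ℚ)
    rw [inv_div]
    push_cast
    field_simp
    ring

lemma conv_num_den (h : CFPkg ξ d P Q) (k : ℕ) :
    (Real.convergent ξ k).num = P k ∧ ((Real.convergent ξ k).den : ℤ) = Q k := by
  have hcop : Nat.Coprime (P k).natAbs (Q k).natAbs :=
    Int.isCoprime_iff_gcd_eq_one.mp (h.coprime k)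
  have hQ : (0 : ℤ) < Q k := h.Qpos k
  rw [bridge k ξ d P Q h]
  exact ⟨Rat.num_div_eq_of_coprime hQ hcop, Rat.den_div_eq_of_coprime hQ hcop⟩

lemma legendre_pkg (h : CFPkg ξ d P Q) (M N : ℤ) (hN : 0 < N)
    (happ : |ξ - (M : ℝ)/(N : ℝ)| < 1/(2*(N : ℝ)^2)) :
    ∃ (k : ℕ) (g : ℤ), 0 < g ∧ M = g * P k ∧ N = g * Q k := by
  set x : ℚ := (M : ℚ)/(N : ℚ) with hx
  have hden : ((x.den : ℤ)) ∣ N := by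
    rw [hx, ← Rat.divInt_eq_div]
    exact Rat.den_dvd M N
  have hdenpos : (0:ℤ) < (x.den : ℤ) := by exact_mod_cast x.pos
  set g : ℤ := N / (x.den : ℤ) with hg
  have hNg : ((x.den : ℤ)) * g = N := Int.mul_ediv_cancel' hden
  have hgpos : 0 < g := by nlinarith [hNg, hdenpos, hN]
  have hnum : x.num * N = M * (x.den : ℤ) := by
    have e : (x.num : ℚ)/(x.den : ℚ) = (M : ℚ)/(N : ℚ) := by
      rw [Rat.num_div_den x]
    have hd0 : ((x.den : ℚ)) ≠ 0 := by
      exact_mod_cast ne_of_gt (show (0:ℤ) < (x.den:ℤ) from hdenpos)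
    have hN0 : ((N : ℚ) : ℚ) ≠ 0 := Int.cast_ne_zero.mpr (ne_of_gt hN)
    rw [div_eq_div_iff hd0 hN0] at e
    exact_mod_cast e
  have hM : M = g * x.num := by
    have e2 : (x.den : ℤ) * (g * x.num) = (x.den : ℤ) * M := by
      linear_combination hnum + x.num * hNg
    exact (mul_left_cancel₀ (ne_of_gt hdenpos) e2).symm
  have hcast : ((x : ℚ) : ℝ) = (M : ℝ)/(N : ℝ) := by rw [hx]; push_cast; ring
  have hbound : |ξ - (x : ℝ)| < 1/(2*(x.den : ℝ)^2) := by
    rw [hcast]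
    refine lt_of_lt_of_le happ ?_
    have hdlN : (x.den : ℤ) ≤ N := Int.le_of_dvd hN hden
    have h1 : (0:ℝ) < (x.den : ℝ) := by exact_mod_cast hdenpos
    have h2 : (x.den : ℝ) ≤ (N : ℝ) := by exact_mod_cast hdlN
    apply one_div_le_one_div_of_le (by positivity)
    nlinarith
  obtain ⟨k, hk⟩ := Real.exists_rat_eq_convergent hbound
  obtain ⟨hnum', hden'⟩ := h.conv_num_den k
  rw [← hk] at hnum' hden'
  refine ⟨k, g, hgpos, ?_, ?_⟩
  · rw [← hnum']; exact hM
  · rw [← hden']; linarith [hNg]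

lemma pigeon (h : CFPkg ξ d P Q) (φ : ℝ) (k : ℕ) :
    ∃ N M : ℤ, 0 ≤ N ∧ N < Q k ∧ |(N : ℝ) * ξ - φ - (M : ℝ)| ≤ 2 / (Q k : ℝ) := by
  obtain ⟨u, v, huv⟩ := h.coprime k
  set K : ℤ := ⌊(Q k : ℝ) * φ⌋ with hK
  set N : ℤ := (K * u) % (Q k) with hN
  have hQZ : (0:ℤ) < Q k := h.Qpos k
  have hQ : (0:ℝ) < (Q k : ℝ) := h.Qr_pos k
  have hN0 : 0 ≤ N := Int.emod_nonneg _ (ne_of_gt hQZ)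
  have hNlt : N < Q k := Int.emod_lt_of_pos _ hQZ
  have hdvd : (Q k) ∣ (N * P k - K) := by
    have hNe : N = K * u - Q k * (K * u / Q k) := by
      rw [hN]; exact Int.emod_def _ _
    refine ⟨-(K * u / Q k) * P k - K * v, ?_⟩
    rw [hNe]
    linear_combination K * huv
  set M : ℤ := (N * P k - K) / Q k with hM
  have hMeq : N * P k - K = Q k * M := (Int.mul_ediv_cancel' hdvd).symm
  refine ⟨N, M, hN0, hNlt, ?_⟩
  have hfloor1 : (K : ℝ) ≤ (Q k : ℝ) * φ := Int.floor_le _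
  have hfloor2 : (Q k : ℝ) * φ < (K : ℝ) + 1 := by
    rw [hK]; push_cast; exact Int.lt_floor_add_one _
  have hup := h.eupper k
  have hQmono : (Q k : ℝ) ≤ (Q (k+1) : ℝ) := by exact_mod_cast h.Qmono k
  have hQ' := h.Qr_pos (k+1)
  -- N ξ - φ - M = (N/Qk) * (Qk ξ - Pk) + (K - Qk φ)/Qk
  have hid : (N : ℝ) * ξ - φ - (M : ℝ)
      = ((N : ℝ)/(Q k : ℝ)) * ((Q k : ℝ) * ξ - (P k : ℝ)) + ((K : ℝ) - (Q k : ℝ) * φ)/(Q k : ℝ) := by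
    have hMR : (N : ℝ) * (P k : ℝ) - (K : ℝ) = (Q k : ℝ) * (M : ℝ) := by exact_mod_cast hMeq
    field_simp
    linear_combination hMR
  rw [hid]
  have hNle : (N : ℝ) ≤ (Q k : ℝ) := by exact_mod_cast hNlt.le
  have hNnn : (0:ℝ) ≤ (N : ℝ) := by exact_mod_cast hN0
  have t1 : |((N : ℝ)/(Q k : ℝ)) * ((Q k : ℝ) * ξ - (P k : ℝ))| ≤ 1/(Q k : ℝ) := by
    rw [abs_mul]
    have e1 : |(N : ℝ)/(Q k : ℝ)| ≤ 1 := by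
      rw [abs_div, abs_of_nonneg hNnn, abs_of_pos hQ, div_le_one hQ]
      exact hNle
    have e2 : |(Q k : ℝ) * ξ - (P k : ℝ)| ≤ 1/(Q k : ℝ) := by
      refine hup.le.trans ?_
      apply one_div_le_one_div_of_le hQ hQmono
    calc |(N : ℝ)/(Q k : ℝ)| * |(Q k : ℝ) * ξ - (P k : ℝ)|
        ≤ 1 * (1/(Q k : ℝ)) := by
          apply mul_le_mul e1 e2 (abs_nonneg _) zero_le_one
      _ = 1/(Q k : ℝ) := one_mul _
  have t2 : |((K : ℝ) - (Q k : ℝ) * φ)/(Q k : ℝ)| ≤ 1/(Q k : ℝ) := by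
    have habs : |(K : ℝ) - (Q k : ℝ) * φ| ≤ 1 := by
      rw [abs_le]; constructor <;> linarith
    rw [abs_div, abs_of_pos hQ]
    gcongr
  calc |((N : ℝ)/(Q k : ℝ)) * ((Q k : ℝ) * ξ - (P k : ℝ)) + ((K : ℝ) - (Q k : ℝ) * φ)/(Q k : ℝ)|
      ≤ |((N : ℝ)/(Q k : ℝ)) * ((Q k : ℝ) * ξ - (P k : ℝ))| + |((K : ℝ) - (Q k : ℝ) * φ)/(Q k : ℝ)| :=
        abs_add_le _ _
    _ ≤ 1/(Q k : ℝ) + 1/(Q k : ℝ) := add_le_add t1 t2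
    _ = 2/(Q k : ℝ) := by ring
end CFPkg

lemma dni_pos {x : ℝ} (hx : ∀ M : ℤ, x ≠ (M : ℝ)) : 0 < distNearestInt x := by
  rw [distNearestInt, abs_pos, sub_ne_zero]
  exact hx (round x)

lemma main_bdd {θ : ℝ} (φ : ℝ) {d P Q : ℕ → ℤ} (h : CFPkg θ d P Q)
    (hpos : ∀ z : ℤ, 0 < distNearestInt ((z : ℝ)*θ - φ)) :
    {z : ℤ | |(z : ℝ)| * distNearestInt ((z : ℝ)*θ - φ) ≤ 2}.Infinite := by
  set g : ℤ → ℝ := fun z => distNearestInt ((z : ℝ)*θ - φ) with hg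
  set S : Set ℤ := {z : ℤ | |(z : ℝ)| * g z ≤ 2} with hS
  have hmem : ∀ k : ℕ, ∃ z : ℤ, z ∈ S ∧ g z ≤ 2/(Q k : ℝ) := by
    intro k
    obtain ⟨N, M, hN0, hNlt, hest⟩ := h.pigeon φ k
    have hQ := h.Qr_pos k
    have hgN : g N ≤ 2/(Q k : ℝ) := le_trans (dni_le _ M) hest
    refine ⟨N, ?_, hgN⟩
    show |(N : ℝ)| * g N ≤ 2
    have h1 : |(N : ℝ)| ≤ (Q k : ℝ) := by
      rw [abs_of_nonneg (by exact_mod_cast hN0 : (0:ℝ) ≤ (N : ℝ))]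
      exact_mod_cast hNlt.le
    calc |(N : ℝ)| * g N ≤ (Q k : ℝ) * (2/(Q k : ℝ)) :=
          mul_le_mul h1 hgN (dni_nonneg _) hQ.le
      _ = 2 := by field_simp
  by_contra hfin
  rw [Set.not_infinite] at hfin
  have hne : S.Nonempty := by
    obtain ⟨z, hz, _⟩ := hmem 0
    exact ⟨z, hz⟩
  obtain ⟨z₀, hz₀, hmin⟩ := Set.exists_min_image S g hfin hne
  have hδ : 0 < g z₀ := hpos z₀
  obtain ⟨k, hk⟩ := exists_nat_gt (2 / g z₀)
  have hQk : (2 / g z₀ : ℝ) < (Q k : ℝ) :=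
    lt_of_lt_of_le hk (by exact_mod_cast h.Qge k)
  obtain ⟨z, hzmem, hz⟩ := hmem k
  have h1 : g z₀ ≤ g z := hmin z hzmem
  have hQpos := h.Qr_pos k
  have h2 : 2/(Q k : ℝ) < g z₀ := by
    rw [div_lt_iff₀ hQpos]
    rw [div_lt_iff₀ hδ] at hQk
    linarith
  linarith

lemma arith_cancel {g X c : ℝ} (h1 : 1 ≤ g) (hX : 0 ≤ X) (h : g^2 * X < c) : X < c := by
  have hg2 : 1 ≤ g^2 := by nlinarith
  have h2 : 1*X ≤ g^2*X := mul_le_mul_of_nonneg_right hg2 hX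
  linarith

lemma arith_inv {dd Qk E : ℝ} (hd : 0 < dd) (hQk : 0 < Qk) (h : 1/dd < Qk*E) : 1/(dd*Qk) < E := by
  rw [div_lt_iff₀ hd] at h
  rw [div_lt_iff₀ (by positivity)]
  nlinarith

lemma arith_Wle {n ε W Qk1 : ℝ} (hn : 0 < n) (hQ : 0 < Qk1) (hε : 0 < ε) (hε1 : ε ≤ 1)
    (h5 : W < 2*n^2*ε*(3*Qk1)) : W < 6*n^2*Qk1 := by
  nlinarith [mul_nonneg (mul_nonneg (by positivity : (0:ℝ) ≤ 6*n^2)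
    (by linarith : (0:ℝ) ≤ 1 - ε)) hQ.le]

lemma arith_QQ {n az W Qk1 QIJ : ℝ} (h2 : 2 ≤ n) (hQ : 0 < QIJ)
    (hlow : n*az - n ≤ W) (hup : W < 6*n^2*Qk1) (hB : 6*n^2*QIJ + 2*n < az) :
    QIJ < Qk1 := by
  have s1 : n*(6*n^2*QIJ + 2*n) < n*az := mul_lt_mul_of_pos_left hB (by linarith)
  have s2 : 6*n^2*QIJ ≤ 6*n^3*QIJ := by nlinarith [mul_nonneg (by positivity : (0:ℝ) ≤ 6*n^2) hQ.le]
  have s3 : 6*n^2*QIJ < 6*n^2*Qk1 := by nlinarith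
  nlinarith [s3, sq_nonneg n]

end LeaperAux
open LeaperAux in
set_option maxHeartbeats 2000000 in
theorem Lconst_eq_zero_iff_leapers
    (θ : ℝ) (hθ : Irrational θ)
    (b : ℕ → ℤ) (hb : ∀ i : ℕ, 1 ≤ i → 1 ≤ b i)
    (p q : ℤ → ℤ)
    (hpm1 : p (-1) = 1) (hqm1 : q (-1) = 0)
    (hp0 : p 0 = b 0) (hq0 : q 0 = 1)
    (hprec : ∀ i : ℕ, p ((i : ℤ) + 1) = b (i + 1) * p i + p ((i : ℤ) - 1))
    (hqrec : ∀ i : ℕ, q ((i : ℤ) + 1) = b (i + 1) * q i + q ((i : ℤ) - 1))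
    (hconv : Filter.Tendsto (fun i : ℕ => (p i : ℝ) / (q i : ℝ)) Filter.atTop (nhds θ))
    -- leaping subscripts
    (I : ℕ → ℕ) (hI : StrictMono I)
    (ha : Filter.Tendsto (fun j : ℕ => b (I j + 1)) Filter.atTop Filter.atTop)
    (hbdd : ∃ C : ℤ, ∀ i : ℕ, 1 ≤ i → (∀ j : ℕ, i ≠ I j + 1) → b i ≤ C)
    -- φ = (rθ + m)/n in reduced form
    (n : ℕ) (hn : 2 ≤ n) (r m : ℤ)
    (hr : 0 ≤ r ∧ r < n) (hm : 0 ≤ m ∧ m < n)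
    (hgcd : Int.gcd r (Int.gcd m n) = 1)
    (φ : ℝ) (hφ : φ = (r * θ + m) / n) :
    Lconst θ φ = 0 ↔
      {j : ℕ | ∃ g : ℤ, IsUnit (g : ZMod n) ∧
        g * p (I j) ≡ m [ZMOD (n : ℤ)] ∧ g * q (I j) ≡ -r [ZMOD (n : ℤ)]}.Infinite := by
  classical
  obtain ⟨C₀, hC₀⟩ := hbdd
  obtain ⟨hr0, hrn⟩ := hr
  obtain ⟨hm0, hmn⟩ := hm
  haveI : NeZero n := ⟨by omega⟩
  haveI : Fact (1 < n) := ⟨by omega⟩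
  have hnZ : (0:ℤ) < (n:ℤ) := by exact_mod_cast (by omega : 0 < n)
  have hnR : (0:ℝ) < (n:ℝ) := by exact_mod_cast (by omega : 0 < n)
  set P : ℕ → ℤ := fun k : ℕ => p (k : ℤ) with hPdef
  set Q : ℕ → ℤ := fun k : ℕ => q (k : ℤ) with hQdef
  have hpkg : CFPkg θ b P Q := by
    refine ⟨hθ, fun k => hb (k+1) (by omega), ?_, ?_, ?_, ?_, ?_, ?_, ?_⟩
    · show p ((0:ℕ) : ℤ) = b 0
      simpa using hp0
    · show q ((0:ℕ) : ℤ) = 1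
      simpa using hq0
    · show p ((1:ℕ) : ℤ) = b 1 * b 0 + 1
      have h1 := hprec 0
      norm_num at h1
      rw [hp0, hpm1] at h1
      simpa using h1
    · show q ((1:ℕ) : ℤ) = b 1
      have h1 := hqrec 0
      norm_num at h1
      rw [hq0, hqm1] at h1
      simpa using h1
    · intro k
      have h1 := hprec (k+1)
      have e1 : ((k+1 : ℕ) : ℤ) + 1 = ((k+2 : ℕ) : ℤ) := by push_cast; ring
      have e2 : ((k+1 : ℕ) : ℤ) - 1 = ((k : ℕ) : ℤ) := by push_cast; ring
      rw [e1, e2] at h1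
      exact h1
    · intro k
      have h1 := hqrec (k+1)
      have e1 : ((k+1 : ℕ) : ℤ) + 1 = ((k+2 : ℕ) : ℤ) := by push_cast; ring
      have e2 : ((k+1 : ℕ) : ℤ) - 1 = ((k : ℕ) : ℤ) := by push_cast; ring
      rw [e1, e2] at h1
      exact h1
    · exact hconv
  have hnφ : (n:ℝ) * φ = r*θ + m := by rw [hφ]; field_simp
  have hnotint : ∀ z M : ℤ, (z:ℝ)*θ - φ ≠ (M:ℝ) := by
    intro z M heq
    rw [sub_eq_iff_eq_add] at heq
    have h1 : ((n*z - r : ℤ) : ℝ) * θ = ((n*M + m : ℤ) : ℝ) := by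
      push_cast
      linear_combination (n:ℝ) * heq + hnφ
    by_cases hz : n*z - r = 0
    · have hz0 : z = 0 := by
        rcases lt_trichotomy z 0 with hzs | hzs | hzs
        · exfalso; nlinarith [mul_pos hnZ (by linarith : (0:ℤ) < -z)]
        · exact hzs
        · exfalso; nlinarith [mul_pos hnZ hzs]
      have hr0' : r = 0 := by rw [hz0] at hz; linarith [hz]
      rw [hz] at h1
      have h2 : (0:ℝ) = ((n*M + m : ℤ) : ℝ) := by rw [← h1]; push_cast; ring
      have h3 : n*M + m = 0 := by exact_mod_cast h2.symm
      have hm0' : m = 0 := by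
        rcases lt_trichotomy M 0 with hMs | hMs | hMs
        · exfalso; nlinarith [mul_pos hnZ (by linarith : (0:ℤ) < -M)]
        · rw [hMs] at h3; linarith [h3]
        · exfalso; nlinarith [mul_pos hnZ hMs]
      rw [hr0', hm0'] at hgcd
      simp [Int.gcd] at hgcd
      omega
    · apply hθ
      have hzR : ((n*z - r : ℤ) : ℝ) ≠ 0 := by exact_mod_cast hz
      refine ⟨((n*M + m : ℤ) : ℚ) / ((n*z - r : ℤ) : ℚ), ?_⟩
      push_cast at hzR h1 ⊢
      field_simp
      linarith [h1]
  have hdnipos : ∀ z : ℤ, 0 < distNearestInt ((z:ℝ)*θ - φ) :=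
    fun z => dni_pos (hnotint z)
  set f : ℤ → ℝ := fun z => |(z:ℝ)| * distNearestInt ((z:ℝ)*θ - φ) with hf
  have hLf : Lconst θ φ = Filter.liminf f Filter.cofinite := rfl
  set S₀ : Set ℝ := {a : ℝ | ∀ᶠ z in Filter.cofinite, a ≤ f z} with hS₀
  have hliminf : Lconst θ φ = sSup S₀ := by rw [hLf, Filter.liminf_eq]
  have h0mem : (0:ℝ) ∈ S₀ := by
    rw [hS₀]
    show ∀ᶠ z in Filter.cofinite, (0:ℝ) ≤ f z
    exact Filter.Eventually.of_forall (fun z => mul_nonneg (abs_nonneg _) (dni_nonneg _))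
  have hinf2 : {z : ℤ | f z ≤ 2}.Infinite := main_bdd φ hpkg hdnipos
  have hbddS₀ : BddAbove S₀ := by
    refine ⟨2, fun a haa => ?_⟩
    have hfreq : ∃ᶠ z in Filter.cofinite, f z ≤ 2 :=
      Filter.frequently_cofinite_iff_infinite.mpr hinf2
    obtain ⟨z, h1, h2⟩ := (hfreq.and_eventually haa).exists
    exact le_trans h2 h1
  constructor
  · intro hL
    set C : ℤ := max C₀ 1 with hCdef
    have hC1 : (1:ℤ) ≤ C := le_max_right _ _
    have hCR : (1:ℝ) ≤ (C:ℝ) := by exact_mod_cast hC1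
    have hC3 : (0:ℝ) < (C:ℝ) + 3 := by linarith
    set ε : ℝ := min (1/(4*(n:ℝ)^2)) (1/(2*(n:ℝ)^2*((C:ℝ)+3))) with hεdef
    have hεpos : 0 < ε := by
      apply lt_min
      · positivity
      · positivity
    have hε1 : ε ≤ 1/(4*(n:ℝ)^2) := min_le_left _ _
    have hε2 : ε ≤ 1/(2*(n:ℝ)^2*((C:ℝ)+3)) := min_le_right _ _
    have hn2R : (2:ℝ) ≤ (n:ℝ) := by exact_mod_cast hn
    have hεle1 : ε ≤ 1 := by
      refine hε1.trans ?_
      rw [div_le_one (by positivity)]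
      nlinarith [hn2R, sq_nonneg ((n:ℝ) - 2)]
    have hT : {z : ℤ | f z < ε}.Infinite := by
      rw [← Filter.frequently_cofinite_iff_infinite]
      by_contra hcon
      rw [Filter.not_frequently] at hcon
      have hmem : ε ∈ S₀ := by
        rw [hS₀]
        exact hcon.mono (fun z hz => not_lt.mp hz)
      have hle := le_csSup hbddS₀ hmem
      rw [← hliminf, hL] at hle
      linarith
    apply Set.infinite_of_forall_exists_gt
    intro J
    set B : ℤ := 6*(n:ℤ)^2 * Q (I (J+1)) + 2*(n:ℤ) with hBdef
    have hQIJpos : (1:ℤ) ≤ Q (I (J+1)) := hpkg.Qpos _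
    have hBpos : 2 ≤ B := by
      have h1 : (0:ℤ) ≤ 6*(n:ℤ)^2 * Q (I (J+1)) :=
        mul_nonneg (by positivity) (by linarith [hQIJpos])
      have h2 : (4:ℤ) ≤ 2*(n:ℤ) := by omega
      rw [hBdef]; linarith
    obtain ⟨z, hzT, hzbig⟩ : ∃ z : ℤ, f z < ε ∧ B < |z| := by
      have hfin : {z : ℤ | |z| ≤ B}.Finite := by
        apply Set.Finite.subset (Set.finite_Icc (-B) B)
        intro z hz
        simp only [Set.mem_setOf_eq] at hz
        rw [Set.mem_Icc]
        constructor
        · linarith [neg_abs_le z]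
        · linarith [le_abs_self z]
      obtain ⟨z, hz⟩ := (hT.diff hfin).nonempty
      refine ⟨z, hz.1, ?_⟩
      have := hz.2
      simp only [Set.mem_setOf_eq] at this
      exact not_le.mp this
    have hz2 : (2:ℤ) ≤ |z| := le_trans hBpos hzbig.le
    set az : ℝ := |(z:ℝ)| with hazdef
    have haz2 : (2:ℝ) ≤ az := by
      rw [hazdef, ← Int.cast_abs]
      exact_mod_cast hz2
    have hazpos : (0:ℝ) < az := by linarith
    set x : ℝ := (z:ℝ)*θ - φ with hxdef
    set R : ℤ := round x with hRdef
    set Qz : ℤ := (n:ℤ)*z - r with hQzdef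
    set Mz : ℤ := (n:ℤ)*R + m with hMzdef
    have hfzval : f z = az * |x - R| := rfl
    have hdistub : |x - R| < ε / az := by
      rw [lt_div_iff₀ hazpos]
      calc |x - R| * az = f z := by rw [hfzval]; ring
        _ < ε := hzT
    have c1 : ((Qz : ℤ) : ℝ) = (n:ℝ)*(z:ℝ) - (r:ℝ) := by rw [hQzdef]; push_cast; ring
    have c2 : ((Mz : ℤ) : ℝ) = (n:ℝ)*(R:ℝ) + (m:ℝ) := by rw [hMzdef]; push_cast; ring
    have hid : (Qz:ℝ)*θ - (Mz:ℝ) = (n:ℝ)*(x - R) := by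
      rw [c1, c2, hxdef]
      linear_combination hnφ
    have habsid : |(Qz:ℝ)*θ - (Mz:ℝ)| = (n:ℝ) * |x - R| := by
      rw [hid, abs_mul, abs_of_pos hnR]
    have hrabs : |(r:ℝ)| ≤ (n:ℝ) := by
      rw [abs_of_nonneg (by exact_mod_cast hr0 : (0:ℝ) ≤ (r:ℝ))]
      exact_mod_cast hrn.le
    have hQzabs1 : (n:ℝ)*az - (n:ℝ) ≤ |(Qz:ℝ)| := by
      have e1 : |(n:ℝ)*(z:ℝ)| = (n:ℝ)*az := by
        rw [abs_mul, abs_of_pos hnR, hazdef]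
      calc (n:ℝ)*az - (n:ℝ) ≤ |(n:ℝ)*(z:ℝ)| - |(r:ℝ)| := by rw [e1]; linarith
        _ ≤ |(n:ℝ)*(z:ℝ) - (r:ℝ)| := abs_sub_abs_le_abs_sub _ _
        _ = |(Qz:ℝ)| := by rw [c1]
    have hQzabs2 : |(Qz:ℝ)| ≤ 2*(n:ℝ)*az := by
      have e1 : |(n:ℝ)*(z:ℝ)| = (n:ℝ)*az := by
        rw [abs_mul, abs_of_pos hnR, hazdef]
      have h1n : (n:ℝ)*1 ≤ (n:ℝ)*az := mul_le_mul_of_nonneg_left (by linarith) hnR.le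
      calc |(Qz:ℝ)| = |(n:ℝ)*(z:ℝ) + (-(r:ℝ))| := by rw [c1, sub_eq_add_neg]
        _ ≤ |(n:ℝ)*(z:ℝ)| + |(-(r:ℝ))| := abs_add_le _ _
        _ ≤ (n:ℝ)*az + (n:ℝ) := by rw [e1, abs_neg]; linarith
        _ ≤ 2*(n:ℝ)*az := by linarith
    have hQzne : Qz ≠ 0 := by
      intro h0
      rw [h0] at hQzabs1
      simp only [Int.cast_zero, abs_zero] at hQzabs1
      have h2n : (n:ℝ)*2 ≤ (n:ℝ)*az := mul_le_mul_of_nonneg_left haz2 hnR.le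
      linarith
    obtain ⟨s, hs, hsQz⟩ : ∃ s : ℤ, (s = 1 ∨ s = -1) ∧ 0 < s * Qz := by
      rcases lt_trichotomy Qz 0 with hqz | hqz | hqz
      · exact ⟨-1, Or.inr rfl, by linarith⟩
      · exact absurd hqz hQzne
      · exact ⟨1, Or.inl rfl, by linarith⟩
    have hs2 : s * s = 1 := by rcases hs with h|h <;> rw [h] <;> ring
    obtain ⟨W, hWeq⟩ : ∃ W : ℤ, W = s*Qz := ⟨_, rfl⟩
    obtain ⟨V, hVeq⟩ : ∃ V : ℤ, V = s*Mz := ⟨_, rfl⟩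
    have hWpos : 0 < W := hWeq ▸ hsQz
    have hWR : (0:ℝ) < (W:ℝ) := by exact_mod_cast hWpos
    have hWabsZ : W = |Qz| := by
      rcases hs with hss | hss
      · rw [hss] at hWeq hsQz
        rw [one_mul] at hWeq hsQz
        rw [hWeq, abs_of_pos hsQz]
      · rw [hss] at hWeq hsQz
        have hq : Qz < 0 := by linarith [hsQz]
        rw [hWeq, abs_of_neg hq]; ring
    have hWcast : (W:ℝ) = |(Qz:ℝ)| := by
      rw [hWabsZ, Int.cast_abs]
    have hWub : (W:ℝ) ≤ 2*(n:ℝ)*az := by rw [hWcast]; exact hQzabs2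
    have hWlow : (n:ℝ)*az - (n:ℝ) ≤ (W:ℝ) := by rw [hWcast]; exact hQzabs1
    have hsabs : |(s:ℝ)| = 1 := by rcases hs with hss|hss <;> rw [hss] <;> norm_num
    have hWVabs : |(W:ℝ)*θ - (V:ℝ)| = (n:ℝ)*|x - R| := by
      have e1 : (W:ℝ)*θ - (V:ℝ) = (s:ℝ) * ((Qz:ℝ)*θ - (Mz:ℝ)) := by
        rw [hWeq, hVeq]; push_cast; ring
      rw [e1, abs_mul, hsabs, one_mul, habsid]
    have happly : |θ - (V:ℝ)/(W:ℝ)| < 1/(2*(W:ℝ)^2) := by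
      have e1 : θ - (V:ℝ)/(W:ℝ) = ((W:ℝ)*θ - (V:ℝ))/(W:ℝ) := by
        field_simp
      rw [e1, abs_div, abs_of_pos hWR, div_lt_div_iff₀ hWR (by positivity)]
      rw [hWVabs]
      have hW2 : (W:ℝ)^2 ≤ (W:ℝ)*(2*(n:ℝ)*az) := by
        rw [sq]
        exact mul_le_mul_of_nonneg_left hWub hWR.le
      have k1 : (n:ℝ)*|x - R| * (2*(W:ℝ)^2) < ((n:ℝ)*(ε/az)) * (2*(W:ℝ)^2) := by
        apply mul_lt_mul_of_pos_right ?_ (by positivity)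
        exact mul_lt_mul_of_pos_left hdistub hnR
      have k2 : ((n:ℝ)*(ε/az)) * (2*(W:ℝ)^2) ≤ ((n:ℝ)*(ε/az)) * (2*((W:ℝ)*(2*(n:ℝ)*az))) := by
        apply mul_le_mul_of_nonneg_left (by linarith [hW2]) (by positivity)
      have k3 : ((n:ℝ)*(ε/az)) * (2*((W:ℝ)*(2*(n:ℝ)*az))) = 4*(n:ℝ)^2*ε*(W:ℝ) := by
        field_simp
        ring
      have k4 : 4*(n:ℝ)^2*ε ≤ 1 := by
        have h4 := mul_le_mul_of_nonneg_left hε1 (by positivity : (0:ℝ) ≤ 4*(n:ℝ)^2)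
        have e4 : 4*(n:ℝ)^2 * (1/(4*(n:ℝ)^2)) = 1 := by field_simp
        linarith
      have k5 : 4*(n:ℝ)^2*ε*(W:ℝ) ≤ 1*(W:ℝ) := mul_le_mul_of_nonneg_right k4 hWR.le
      linarith
    obtain ⟨k, g0, hg0pos, hVk, hWk⟩ := hpkg.legendre_pkg V W hWpos happly
    have hbk1Z : (1:ℤ) ≤ b (k+1) := hb _ (by omega)
    have hbk1R : (1:ℝ) ≤ (b (k+1):ℝ) := by exact_mod_cast hbk1Z
    have hMz' : Mz = s * V := by rw [hVeq, ← mul_assoc, hs2, one_mul]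
    have hQz' : Qz = s * W := by rw [hWeq, ← mul_assoc, hs2, one_mul]
    obtain ⟨g1, hg1eq⟩ : ∃ g1 : ℤ, g1 = s * g0 := ⟨_, rfl⟩
    have hMzk : Mz = g1 * P k := by rw [hMz', hVk, hg1eq]; ring
    have hQzk : Qz = g1 * Q k := by rw [hQz', hWk, hg1eq]; ring
    have hcong1 : g1 * P k ≡ m [ZMOD (n:ℤ)] := by
      rw [Int.modEq_iff_dvd]
      refine ⟨-R, ?_⟩
      rw [← hMzk, hMzdef]; ring
    have hcong2 : g1 * Q k ≡ -r [ZMOD (n:ℤ)] := by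
      rw [Int.modEq_iff_dvd]
      refine ⟨-z, ?_⟩
      rw [← hQzk, hQzdef]; ring
    have hgcd1 : Int.gcd g1 (n:ℤ) = 1 := by
      have e1 : ((Int.gcd g1 (n:ℤ) : ℤ)) ∣ g1 := Int.gcd_dvd_left _ _
      have e2 : ((Int.gcd g1 (n:ℤ) : ℤ)) ∣ (n:ℤ) := Int.gcd_dvd_right _ _
      have e3 : ((Int.gcd g1 (n:ℤ) : ℤ)) ∣ r := by
        have er : r = (n:ℤ)*z - g1 * Q k := by rw [← hQzk, hQzdef]; ring
        rw [er]; exact dvd_sub (e2.mul_right z) (e1.mul_right (Q k))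
      have e4 : ((Int.gcd g1 (n:ℤ) : ℤ)) ∣ m := by
        have em : m = g1 * P k - (n:ℤ)*R := by rw [← hMzk, hMzdef]; ring
        rw [em]; exact dvd_sub (e1.mul_right (P k)) (e2.mul_right R)
      have e5 : ((Int.gcd g1 (n:ℤ) : ℤ)) ∣ ((Int.gcd r ((Int.gcd m (n:ℤ) : ℤ)) : ℤ)) :=
        Int.dvd_coe_gcd e3 (Int.dvd_coe_gcd e4 e2)
      rw [hgcd] at e5
      have e6 : ((Int.gcd g1 (n:ℤ) : ℤ)) ∣ (1:ℤ) := by exact_mod_cast e5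
      rcases Int.isUnit_iff.mp (isUnit_of_dvd_one e6) with hone | hone
      · exact_mod_cast hone
      · exfalso; omega
    have hunit : IsUnit ((g1 : ℤ) : ZMod n) := by
      obtain ⟨a', b', hab⟩ := Int.isCoprime_iff_gcd_eq_one.mpr hgcd1
      have hc : ((a' * g1 + b' * (n:ℤ) : ℤ) : ZMod n) = ((1 : ℤ) : ZMod n) := by rw [hab]
      push_cast at hc
      rw [ZMod.natCast_self] at hc
      rw [mul_zero, add_zero] at hc
      exact IsUnit.of_mul_eq_one _ (by rw [mul_comm]; exact hc)
    have hWVE : (W:ℝ)*θ - (V:ℝ) = (g0:ℝ) * ((Q k:ℝ)*θ - (P k:ℝ)) := by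
      have d1 : ((W : ℤ) : ℝ) = (g0:ℝ)*((Q k : ℤ):ℝ) := by exact_mod_cast congrArg Int.cast hWk
      have d2 : ((V : ℤ) : ℝ) = (g0:ℝ)*((P k : ℤ):ℝ) := by exact_mod_cast congrArg Int.cast hVk
      rw [d1, d2]; ring
    have hg0R : (1:ℝ) ≤ (g0:ℝ) := by exact_mod_cast hg0pos
    have hprod : (W:ℝ) * |(W:ℝ)*θ - (V:ℝ)| < 2*(n:ℝ)^2*ε := by
      rw [hWVabs]
      have k1 : (W:ℝ) * ((n:ℝ)*|x - R|) < (W:ℝ) * ((n:ℝ)*(ε/az)) := by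
        apply mul_lt_mul_of_pos_left ?_ hWR
        exact mul_lt_mul_of_pos_left hdistub hnR
      have k2 : (W:ℝ) * ((n:ℝ)*(ε/az)) ≤ (2*(n:ℝ)*az) * ((n:ℝ)*(ε/az)) := by
        apply mul_le_mul_of_nonneg_right hWub (by positivity)
      have k3 : (2*(n:ℝ)*az) * ((n:ℝ)*(ε/az)) = 2*(n:ℝ)^2*ε := by
        field_simp
      linarith
    have hQkR : (0:ℝ) < (Q k:ℝ) := hpkg.Qr_pos k
    have hQkE : (Q k:ℝ) * |(Q k:ℝ)*θ - (P k:ℝ)| < 2*(n:ℝ)^2*ε := by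
      have d1 : ((W : ℤ) : ℝ) = (g0:ℝ)*((Q k : ℤ):ℝ) := by exact_mod_cast congrArg Int.cast hWk
      have e1 : (W:ℝ) * |(W:ℝ)*θ - (V:ℝ)| = (g0:ℝ)^2 * ((Q k:ℝ)*|(Q k:ℝ)*θ - (P k:ℝ)|) := by
        rw [hWVE, d1, abs_mul, abs_of_pos (by linarith : (0:ℝ) < (g0:ℝ))]; ring
      rw [e1] at hprod
      exact arith_cancel hg0R (mul_nonneg hQkR.le (abs_nonneg _)) hprod
    have hpl := hpkg.prodLower k
    have hdk : (C:ℝ) < (b (k+1) : ℝ) := by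
      have key : 2*(n:ℝ)^2*ε ≤ 1/((C:ℝ)+3) := by
        have h6 := mul_le_mul_of_nonneg_left hε2 (by positivity : (0:ℝ) ≤ 2*(n:ℝ)^2)
        have e6 : 2*(n:ℝ)^2 * (1/(2*(n:ℝ)^2*((C:ℝ)+3))) = 1/((C:ℝ)+3) := by
          field_simp
        linarith
      have key2 : 1/((b (k+1):ℝ)+2) < 1/((C:ℝ)+3) := by linarith [hpl, hQkE]
      rw [div_lt_div_iff₀ (by linarith) hC3] at key2
      linarith
    have hdkZ : C₀ < b (k+1) := by
      have h1 : (C₀:ℝ) ≤ (C:ℝ) := by exact_mod_cast le_max_left C₀ 1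
      exact_mod_cast lt_of_le_of_lt h1 hdk
    obtain ⟨j', hj'⟩ : ∃ j', k + 1 = I j' + 1 := by
      by_contra hcon
      push_neg at hcon
      have := hC₀ (k+1) (by omega) hcon
      omega
    have hkj : k = I j' := by omega
    -- size estimate to force j' > J
    have hQk1R : (0:ℝ) < (Q (k+1):ℝ) := hpkg.Qr_pos _
    have hEklow : 1/(3*(Q (k+1):ℝ)) < |(Q k:ℝ)*θ - (P k:ℝ)| := by
      have hgeZ : (b (k+1):ℝ)*(Q k:ℝ) ≤ (Q (k+1):ℝ) := by exact_mod_cast hpkg.Qsucc_ge k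
      have hmoZ : (Q k:ℝ) ≤ (Q (k+1):ℝ) := by exact_mod_cast hpkg.Qmono k
      have h1 : ((b (k+1):ℝ)+2)*(Q k:ℝ) ≤ 3*(Q (k+1):ℝ) := by
        have e1 : ((b (k+1):ℝ)+2)*(Q k:ℝ) = (b (k+1):ℝ)*(Q k:ℝ) + 2*(Q k:ℝ) := by ring
        rw [e1]; linarith
      have h2 : 1/(3*(Q (k+1):ℝ)) ≤ 1/(((b (k+1):ℝ)+2)*(Q k:ℝ)) := by
        apply one_div_le_one_div_of_le (by positivity) h1
      have h3 : 1/(((b (k+1):ℝ)+2)*(Q k:ℝ)) < |(Q k:ℝ)*θ - (P k:ℝ)| :=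
        arith_inv (by linarith) hQkR hpl
      linarith
    have h4 : (W:ℝ) * |(Q k:ℝ)*θ - (P k:ℝ)| < 2*(n:ℝ)^2*ε := by
      have e2 : |(W:ℝ)*θ - (V:ℝ)| = (g0:ℝ)*|(Q k:ℝ)*θ - (P k:ℝ)| := by
        rw [hWVE, abs_mul, abs_of_pos (by linarith : (0:ℝ) < (g0:ℝ))]
      have e3 : (W:ℝ)*|(Q k:ℝ)*θ - (P k:ℝ)| ≤ (W:ℝ)*((g0:ℝ)*|(Q k:ℝ)*θ - (P k:ℝ)|) := by
        apply mul_le_mul_of_nonneg_left ?_ hWR.le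
        exact le_mul_of_one_le_left (abs_nonneg _) hg0R
      rw [← e2] at e3
      linarith [hprod]
    have hWle : (W:ℝ) < 6*(n:ℝ)^2 * (Q (k+1) : ℝ) := by
      have h5 : (W:ℝ) * (1/(3*(Q (k+1):ℝ))) < 2*(n:ℝ)^2*ε :=
        lt_of_le_of_lt (mul_le_mul_of_nonneg_left hEklow.le hWR.le) h4
      rw [mul_one_div, div_lt_iff₀ (by positivity)] at h5
      exact arith_Wle hnR hQk1R hεpos hεle1 h5
    have hBz : (B:ℝ) < az := by
      rw [hazdef, ← Int.cast_abs]
      exact_mod_cast hzbig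
    have hBR : (B:ℝ) = 6*(n:ℝ)^2*(Q (I (J+1)):ℝ) + 2*(n:ℝ) := by
      rw [hBdef]; push_cast; ring
    have hQQ : (Q (I (J+1)) : ℝ) < (Q (k+1) : ℝ) := by
      have hQIJR : (0:ℝ) < (Q (I (J+1)):ℝ) := hpkg.Qr_pos _
      exact arith_QQ hn2R hQIJR hWlow hWle (by rw [← hBR]; exact hBz)
    have hk1 : I (J+1) < k+1 := by
      by_contra hcon
      push_neg at hcon
      have hmono := hpkg.Qmono' hcon
      have : (Q (k+1):ℝ) ≤ (Q (I (J+1)):ℝ) := by exact_mod_cast hmono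
      linarith
    have hjJ : J < j' := by
      have h1 : I (J+1) ≤ I j' := by omega
      have h2 : J + 1 ≤ j' := hI.le_iff_le.mp h1
      omega
    refine ⟨j', ⟨g1, hunit, ?_, ?_⟩, hjJ⟩
    · exact hkj ▸ hcong1
    · exact hkj ▸ hcong2

  · intro hS
    rw [hliminf]
    apply le_antisymm
    · apply csSup_le ⟨0, h0mem⟩
      intro a haS
      by_contra hlt
      push_neg at hlt
      have hfin : {z : ℤ | ¬ a ≤ f z}.Finite := Filter.eventually_cofinite.mp haS
      obtain ⟨B, hB⟩ := (hfin.image Int.natAbs).bddAbove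
      have hc : ∀ᶠ j in Filter.atTop, (⌈2/a⌉ + 1 : ℤ) ≤ b (I j + 1) :=
        ha.eventually_ge_atTop _
      obtain ⟨J₁, hJ₁⟩ := Filter.eventually_atTop.mp hc
      obtain ⟨j, hjS, hjgt⟩ := hS.exists_gt (max J₁ (n*(B+1)))
      obtain ⟨g, hgunit, hgp, hgq⟩ := hjS
      set g' : ℤ := g % n with hg'def
      have hgg' : g' ≡ g [ZMOD (n:ℤ)] := Int.emod_emod_of_dvd g dvd_rfl
      have hg'unit : IsUnit ((g' : ℤ) : ZMod n) := by
        rwa [show ((g' : ℤ) : ZMod n) = ((g : ℤ) : ZMod n) from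
          (ZMod.intCast_eq_intCast_iff _ _ _).mpr hgg']
      have hg'0 : 0 ≤ g' := Int.emod_nonneg g (ne_of_gt hnZ)
      have hg'lt : g' < n := Int.emod_lt_of_pos g hnZ
      have hg'ne : g' ≠ 0 := by
        intro h0
        rw [h0] at hg'unit
        simp at hg'unit
      have hg'1 : 1 ≤ g' := by omega
      have hgp' : g' * P (I j) ≡ m [ZMOD (n:ℤ)] := (hgg'.mul_right _).trans hgp
      have hgq' : g' * Q (I j) ≡ -r [ZMOD (n:ℤ)] := (hgg'.mul_right _).trans hgq
      have hdvd1 : (n:ℤ) ∣ g' * Q (I j) + r := by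
        have h1 := hgq'.dvd
        have : g' * Q (I j) + r = -(-r - g' * Q (I j)) := by ring
        rw [this]
        exact dvd_neg.mpr h1
      have hdvd2 : (n:ℤ) ∣ g' * P (I j) - m := by
        have h1 := hgp'.dvd
        have : g' * P (I j) - m = -(m - g' * P (I j)) := by ring
        rw [this]
        exact dvd_neg.mpr h1
      set Qin : ℤ := (g' * Q (I j) + r) / n with hQindef
      set Pin : ℤ := (g' * P (I j) - m) / n with hPindef
      have hQin : (n:ℤ) * Qin = g' * Q (I j) + r := Int.mul_ediv_cancel' hdvd1
      have hPin : (n:ℤ) * Pin = g' * P (I j) - m := Int.mul_ediv_cancel' hdvd2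
      have hQZ : (1:ℤ) ≤ Q (I j) := hpkg.Qpos (I j)
      have hQR : (0:ℝ) < (Q (I j) : ℝ) := hpkg.Qr_pos (I j)
      have c1R : (n:ℝ) * (Qin:ℝ) = (g':ℝ)*(Q (I j):ℝ) + (r:ℝ) := by exact_mod_cast hQin
      have c2R : (n:ℝ) * (Pin:ℝ) = (g':ℝ)*(P (I j):ℝ) - (m:ℝ) := by exact_mod_cast hPin
      have hreal : (Qin:ℝ)*θ - φ - (Pin:ℝ)
          = ((g':ℝ) * ((Q (I j):ℝ)*θ - (P (I j):ℝ)))/(n:ℝ) := by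
        rw [eq_div_iff (ne_of_gt hnR)]
        linear_combination θ * c1R - c2R - hnφ
      -- size bounds on Qin
      have hQinpos : 0 < Qin := by nlinarith [hQin, hg'1, hQZ, hr0, hnZ]
      have hQinle : Qin ≤ 2 * Q (I j) := by nlinarith [hQin, hg'lt, hrn, hnZ, hQZ]
      -- f Qin estimate
      have hEub := hpkg.prodUpper (I j)
      have hdpos : (0:ℤ) < b (I j + 1) := hb _ (by omega)
      have hdR : (0:ℝ) < (b (I j + 1) : ℝ) := by exact_mod_cast hdpos
      have hfQin : f Qin ≤ 2 / (b (I j + 1) : ℝ) := by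
        have habs1 : |(Qin:ℝ)| ≤ 2*(Q (I j):ℝ) := by
          rw [abs_of_pos (by exact_mod_cast hQinpos : (0:ℝ) < (Qin:ℝ))]
          exact_mod_cast hQinle
        have hd1 : distNearestInt ((Qin:ℝ)*θ - φ) ≤ |(Q (I j):ℝ)*θ - (P (I j):ℝ)| := by
          refine (dni_le _ Pin).trans ?_
          rw [hreal, abs_div, abs_mul, abs_of_pos hnR,
            abs_of_nonneg (by exact_mod_cast hg'0 : (0:ℝ) ≤ (g':ℝ))]
          rw [div_le_iff₀ hnR]
          have hg'len : (g':ℝ) ≤ (n:ℝ) := by exact_mod_cast hg'lt.le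
          nlinarith [abs_nonneg ((Q (I j):ℝ)*θ - (P (I j):ℝ)), hg'len]
        calc f Qin = |(Qin:ℝ)| * distNearestInt ((Qin:ℝ)*θ - φ) := rfl
          _ ≤ (2*(Q (I j):ℝ)) * |(Q (I j):ℝ)*θ - (P (I j):ℝ)| := by
              apply mul_le_mul habs1 hd1 (dni_nonneg _) (by positivity)
          _ = 2 * ((Q (I j):ℝ) * |(Q (I j):ℝ)*θ - (P (I j):ℝ)|) := by ring
          _ ≤ 2 * (1 / (b (I j + 1) : ℝ)) := by linarith [hEub]
          _ = 2 / (b (I j + 1) : ℝ) := by ring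
      -- the chosen j is beyond thresholds
      have hjJ₁ : J₁ ≤ j := le_trans (le_max_left _ _) hjgt.le
      have hjB : (n*(B+1) : ℕ) < j := lt_of_le_of_lt (le_max_right _ _) hjgt
      have hdbig : (⌈2/a⌉ + 1 : ℤ) ≤ b (I j + 1) := hJ₁ j hjJ₁
      have hsmall : 2 / (b (I j + 1) : ℝ) < a := by
        have h2a : 2/a ≤ (⌈2/a⌉ : ℝ) := Int.le_ceil _
        have hceil : ((⌈2/a⌉ + 1 : ℤ) : ℝ) ≤ (b (I j + 1) : ℝ) := by exact_mod_cast hdbig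
        push_cast at hceil
        have hgt : 2/a < (b (I j + 1) : ℝ) := by linarith
        rw [div_lt_iff₀ hlt] at hgt
        rw [div_lt_iff₀ hdR]
        linarith
      -- Qin is not in the exceptional set
      have hQinnotin : Qin ∉ {z : ℤ | ¬ a ≤ f z} := by
        intro hmem
        have h1 : Qin.natAbs ∈ Int.natAbs '' {z : ℤ | ¬ a ≤ f z} := ⟨Qin, hmem, rfl⟩
        have h2 : Qin.natAbs ≤ B := hB h1
        -- but Qin > B : n * Qin ≥ Q (I j) ≥ I j ≥ j > n*(B+1)
        have h3 : (j:ℤ) ≤ Q (I j) := le_trans (by exact_mod_cast hI.le_apply) (hpkg.Qge (I j))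
        have h4 : (j:ℤ) ≤ n * Qin := by nlinarith [hQin, hg'1, hQZ, hr0, h3]
        have h5 : (n*(B+1) : ℤ) < (j:ℤ) := by exact_mod_cast hjB
        have h6 : (B:ℤ) < Qin := by nlinarith [h4, h5, hnZ]
        have h7 : (Qin.natAbs : ℤ) = Qin := Int.natAbs_of_nonneg hQinpos.le
        omega
      have : a ≤ f Qin := not_not.mp hQinnotin
      linarith
    · exact le_csSup hbddS₀ h0mem
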